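/- Let K be an arbitrary field. Then no subfield of K that is contained in K̃ is algebraically closed; that is, for every subfield F of K with F ⊆ K̃, the field F is not algebraically closed. -/

import Mathlib

set_option maxHeartbeats 1000000
set_option synthInstance.maxHeartbeats 400000


/-- A map `f` is *arithmetic* on a subset `A` of a field `K`. -/
def ArithmeticMap {K : Type*} [Field K] (A : Set K) (f : K → K) : Prop :=
  ((1 : K) ∈ A → f 1 = 1) ∧
  (∀ a b : K, a ∈ A → b ∈ A → a + b ∈ A → f (a + b) = f a + f b) ∧
  (∀ a b : K, a ∈ A → b ∈ A → a * b ∈ A → f (a * b) = f a * f b)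

/-- An element `r` of a field `K` is *arithmetically fixed* if there is a finite set
`A ⊆ K` with `r ∈ A` such that every arithmetic map `f : A → K` fixes `r`. -/
def ArithFixed {K : Type*} [Field K] (r : K) : Prop :=
  ∃ A : Finset K, r ∈ A ∧ ∀ f : K → K, ArithmeticMap (↑A : Set K) f → f r = r

open Polynomial IntermediateField

/-- Main lemma: if `F` is an algebraically closed subfield of `K`, `r : K` is integral over the
"prime field" `k`, and the minimal polynomial of `r` over `k` has a root `r₂ ∈ F` with
`r₂ ≠ r`, then `r` is not arithmetically fixed. -/
lemma arith_main {k K : Type*} [Field k] [Field K] [Algebra k K]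
    (F : Subfield K) (hAC : IsAlgClosed ↥F) [Algebra k ↥F]
    (hcomp : (F.subtype).comp (algebraMap k ↥F) = algebraMap k K)
    {r r₂ : K} (hr₂F : r₂ ∈ F) (hne : r₂ ≠ r)
    (hint : IsIntegral k r) (hroot : Polynomial.aeval r₂ (minpoly k r) = 0) :
    ¬ ArithFixed r := by
  classical
  haveI := hAC
  rintro ⟨A, hrA, hfix⟩
  set R := Algebra.adjoin k ((A : Set K)) with hRdef
  have hAR : (A : Set K) ⊆ (R : Set K) := Algebra.subset_adjoin
  have hrR : r ∈ R := hAR hrA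
  haveI : Nontrivial ↥R := ⟨⟨0, 1, by simp [Subtype.ext_iff]⟩⟩
  obtain ⟨m, hm⟩ := Ideal.exists_maximal ↥R
  haveI := hm
  letI : Field (↥R ⧸ m) := Ideal.Quotient.field m
  haveI hft : Algebra.FiniteType k ↥R :=
    (Subalgebra.fg_iff_finiteType R).mp (Subalgebra.fg_adjoin_finset _)
  haveI : Algebra.FiniteType k (↥R ⧸ m) :=
    Algebra.FiniteType.of_surjective (Ideal.Quotient.mkₐ k m)
      (Ideal.Quotient.mkₐ_surjective k m)
  haveI : Module.Finite k (↥R ⧸ m) := finite_of_finite_type_of_isJacobsonRing k _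
  haveI : Algebra.IsAlgebraic k (↥R ⧸ m) := Algebra.IsAlgebraic.of_finite k _
  set rr : ↥R := ⟨r, hrR⟩ with hrr
  set rb : ↥R ⧸ m := Ideal.Quotient.mk m rr with hrb
  set m₀ := minpoly k r with hm₀
  have hWM : m₀.Monic := minpoly.monic hint
  have hWI : Irreducible m₀ := minpoly.irreducible hint
  have haevalR : Polynomial.aeval rr m₀ = 0 := by
    have h2 := Polynomial.aeval_algHom_apply R.val rr m₀
    have h3 : R.val rr = r := rfl
    rw [h3, minpoly.aeval] at h2
    exact Subtype.ext h2.symm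
  have haevalQ : Polynomial.aeval rb m₀ = 0 := by
    have h2 := Polynomial.aeval_algHom_apply (Ideal.Quotient.mkₐ k m) rr m₀
    rw [haevalR, map_zero] at h2
    simpa [Ideal.Quotient.mkₐ_eq_mk] using h2
  have hintQ : IsIntegral k rb := ⟨m₀, hWM, by rwa [← Polynomial.aeval_def]⟩
  have hminQ : minpoly k rb = m₀ := (minpoly.eq_of_irreducible_of_monic hWI haevalQ hWM).symm
  have hsubinj : Function.Injective (F.subtype) := F.subtype.injective
  have hr₂root : Polynomial.aeval (⟨r₂, hr₂F⟩ : ↥F) m₀ = 0 := by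
    apply hsubinj
    rw [map_zero, Polynomial.aeval_def, Polynomial.hom_eval₂, hcomp]
    rw [← Polynomial.aeval_def]
    exact hroot
  have hr₂mem : (⟨r₂, hr₂F⟩ : ↥F) ∈ (minpoly k rb).aroots ↥F := by
    rw [hminQ, Polynomial.mem_aroots]
    exact ⟨minpoly.ne_zero hint, hr₂root⟩
  set τ : (k⟮rb⟯ →ₐ[k] ↥F) :=
    (IntermediateField.algHomAdjoinIntegralEquiv k (K := ↥F) hintQ).symm ⟨_, hr₂mem⟩ with hτ
  letI : Algebra (k⟮rb⟯) ↥F := τ.toRingHom.toAlgebra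
  haveI : Algebra.IsAlgebraic (k⟮rb⟯) (↥R ⧸ m) := Algebra.IsAlgebraic.tower_top (K := k) _
  haveI : Module.IsTorsionFree (k⟮rb⟯) ↥F :=
    Module.isTorsionFree_iff_algebraMap_injective.mpr (algebraMap (k⟮rb⟯) ↥F).injective
  let ψ : (↥R ⧸ m) →ₐ[k⟮rb⟯] ↥F := IsAlgClosed.lift
  have hψrb : ψ rb = ⟨r₂, hr₂F⟩ := by
    show ψ (algebraMap (k⟮rb⟯) (↥R ⧸ m) (IntermediateField.AdjoinSimple.gen k rb)) = ⟨r₂, hr₂F⟩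
    rw [AlgHom.commutes]
    show τ (IntermediateField.AdjoinSimple.gen k rb) = _
    exact IntermediateField.algHomAdjoinIntegralEquiv_symm_apply_gen k hintQ _
  set φ : ↥R →+* K :=
    (F.subtype.comp (ψ : (↥R ⧸ m) →+* ↥F)).comp (Ideal.Quotient.mk m) with hφ
  set f : K → K := fun x => if h : x ∈ R then φ ⟨x, h⟩ else 0 with hfdef
  have harith : ArithmeticMap (↑A) f := by
    refine ⟨fun _ => ?_, fun a b ha hb _ => ?_, fun a b ha hb _ => ?_⟩
    · rw [hfdef]
      simp only [dif_pos (one_mem R)]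
      exact map_one φ
    · have ha' : a ∈ R := hAR ha
      have hb' : b ∈ R := hAR hb
      have hab' : a + b ∈ R := add_mem ha' hb'
      rw [hfdef]
      simp only [dif_pos ha', dif_pos hb', dif_pos hab']
      exact map_add φ ⟨a, ha'⟩ ⟨b, hb'⟩
    · have ha' : a ∈ R := hAR ha
      have hb' : b ∈ R := hAR hb
      have hab' : a * b ∈ R := mul_mem ha' hb'
      rw [hfdef]
      simp only [dif_pos ha', dif_pos hb', dif_pos hab']
      exact map_mul φ ⟨a, ha'⟩ ⟨b, hb'⟩
  have hfr := hfix f harith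
  have hfr2 : f r = r₂ := by
    rw [hfdef]
    simp only [dif_pos hrR]
    show F.subtype (ψ (Ideal.Quotient.mk m rr)) = r₂
    rw [← hrb, hψrb]
    rfl
  rw [hfr2] at hfr
  exact hne hfr

/-- For an arbitrary field `K`, no subfield of `K` contained in `K̃` is algebraically closed. -/
theorem no_algClosed_subfield_of_arithFixed (K : Type*) [Field K]
    (F : Subfield K) (hF : (F : Set K) ⊆ {r : K | ArithFixed r}) :
    ¬ IsAlgClosed F := by
  intro hAC
  haveI := hAC
  obtain hp | h0 := CharP.char_is_prime_or_zero K (ringChar K)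
  · -- characteristic p
    set p := ringChar K with hpdef
    haveI : CharP K p := ringChar.charP K
    haveI : Fact p.Prime := ⟨hp⟩
    have h1p : 1 < p := hp.one_lt
    have hsubinj : Function.Injective (F.subtype) := F.subtype.injective
    haveI : CharP ↥F p := F.subtype.charP hsubinj p
    letI : Algebra (ZMod p) K := ZMod.algebra _ _
    letI : Algebra (ZMod p) ↥F := ZMod.algebra _ _
    have hcomp : (F.subtype).comp (algebraMap (ZMod p) ↥F) = algebraMap (ZMod p) K :=
      RingHom.ext_zmod _ _
    set g : (↥F)[X] := X ^ p ^ 2 - X with hg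
    have h1pp : 1 < p ^ 2 := Nat.one_lt_pow two_ne_zero h1p
    have hgdeg : g.natDegree = p ^ 2 := by
      rw [hg, natDegree_sub_eq_left_of_natDegree_lt
        (by rw [natDegree_X, natDegree_X_pow]; exact h1pp), natDegree_X_pow]
    have hgsep : g.Separable := galois_poly_separable p (p ^ 2) (dvd_pow_self p two_ne_zero)
    have hcardr : Fintype.card (g.rootSet ↥F) = p ^ 2 := by
      rw [card_rootSet_eq_natDegree hgsep (IsAlgClosed.splits _), hgdeg]
    have hx : ∃ y : ↥F, y ∈ g.rootSet ↥F ∧ y ^ p ≠ y := by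
      by_contra hc
      push_neg at hc
      have h2 : (X ^ p - X : (↥F)[X]) = 0 := by
        apply Polynomial.eq_zero_of_natDegree_lt_card_of_eval_eq_zero _
          (f := fun y : g.rootSet ↥F => (y : ↥F)) Subtype.val_injective
        · intro i
          simp only [eval_sub, eval_pow, eval_X, sub_eq_zero]
          exact hc i i.2
        · have hdeg2 : (X ^ p - X : (↥F)[X]).natDegree = p := by
            rw [natDegree_sub_eq_left_of_natDegree_lt
              (by rw [natDegree_X, natDegree_X_pow]; exact h1p), natDegree_X_pow]
          rw [hdeg2, hcardr]
          nlinarith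
      have h3 := congrArg (fun q : (↥F)[X] => q.coeff p) h2
      simp only [coeff_sub, coeff_X_pow, coeff_X, if_pos rfl,
        if_neg (by omega : ¬ (1 : ℕ) = p), coeff_zero, sub_zero] at h3
      exact one_ne_zero h3
    obtain ⟨y, hyroot, hyne⟩ := hx
    have hyy : y ^ p ^ 2 = y := by
      have h5 : Polynomial.aeval y g = 0 := (Polynomial.mem_rootSet.mp hyroot).2
      rw [hg, map_sub, map_pow, aeval_X, sub_eq_zero] at h5
      exact h5
    set r : K := ((y : ↥F) : K) with hrdef
    have hrF : r ∈ F := y.2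
    have hr₂F : r ^ p ∈ F := pow_mem hrF p
    have hne : r ^ p ≠ r := by
      intro h
      apply hyne
      have : ((y ^ p : ↥F) : K) = ((y : ↥F) : K) := by push_cast; exact h
      exact_mod_cast this
    have hrpow : r ^ p ^ 2 = r := by
      have h6 : ((y ^ p ^ 2 : ↥F) : K) = ((y : ↥F) : K) := by rw [hyy]
      rw [hrdef]
      push_cast at h6
      exact h6
    have hint : IsIntegral (ZMod p) r := by
      refine ⟨X ^ p ^ 2 - X, monic_X_pow_sub ?_, ?_⟩
      · rw [degree_X]
        exact_mod_cast h1pp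
      · rw [eval₂_sub, eval₂_X_pow, eval₂_X, hrpow, sub_self]
    have hroot : Polynomial.aeval (r ^ p) (minpoly (ZMod p) r) = 0 := by
      have h0 := minpoly.aeval (ZMod p) r
      have h1 := Polynomial.hom_eval₂ (minpoly (ZMod p) r)
        (algebraMap (ZMod p) K) (frobenius K p) r
      rw [Polynomial.aeval_def] at h0
      rw [h0, map_zero] at h1
      have h2 : (frobenius K p).comp (algebraMap (ZMod p) K) = algebraMap (ZMod p) K :=
        RingHom.ext_zmod _ _
      rw [h2, frobenius_def] at h1
      rw [Polynomial.aeval_def, ← h1]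
    exact arith_main F hAC hcomp hr₂F hne hint hroot (hF hrF)
  · -- characteristic zero
    haveI : CharP K 0 := h0 ▸ ringChar.charP K
    haveI : CharZero K := CharP.charP_to_charZero K
    have hsubinj : Function.Injective (F.subtype) := F.subtype.injective
    haveI : CharZero ↥F := F.subtype.charZero -- ??
    obtain ⟨s, hs⟩ := IsAlgClosed.exists_pow_nat_eq (k := ↥F) (2 : ↥F) zero_lt_two
    set r : K := (s : K) with hrdef
    have hrF : r ∈ F := s.2
    have hr2 : r ^ 2 = 2 := by
      have h1 := congrArg (F.subtype) hs
      rw [map_pow] at h1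
      have h2 : F.subtype (2 : ↥F) = (2 : K) := map_ofNat _ 2
      rw [h2] at h1
      exact h1
    have hrne : -r ≠ r := by
      intro h
      have h3 : (2 : K) * r = 0 := by linear_combination -h
      have h4 : r = 0 := by
        rcases mul_eq_zero.mp h3 with h' | h'
        · exact absurd h' two_ne_zero
        · exact h'
      rw [h4] at hr2
      norm_num at hr2
    have hQno : ∀ b : ℚ, b ^ 2 ≠ 2 := by
      intro b hb
      apply irrational_sqrt_two
      refine ⟨|b|, ?_⟩
      have hbR : (b : ℝ) ^ 2 = 2 := by exact_mod_cast hb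
      have : ((|b| : ℚ) : ℝ) = |(b : ℝ)| := by push_cast; rfl
      rw [this, ← Real.sqrt_sq_eq_abs, hbR]
    have hirr : Irreducible (X ^ 2 - C (2 : ℚ)) :=
      X_pow_sub_C_irreducible_of_prime Nat.prime_two hQno
    have haev : Polynomial.aeval r (X ^ 2 - C (2 : ℚ)) = 0 := by
      rw [map_sub, aeval_X_pow, aeval_C, hr2]
      norm_num
    have hmin : minpoly ℚ r = X ^ 2 - C 2 :=
      (minpoly.eq_of_irreducible_of_monic hirr haev (monic_X_pow_sub_C 2 two_ne_zero)).symm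
    have hint : IsIntegral ℚ r :=
      ⟨X ^ 2 - C 2, monic_X_pow_sub_C 2 two_ne_zero, by rwa [← Polynomial.aeval_def]⟩
    have hroot : Polynomial.aeval (-r) (minpoly ℚ r) = 0 := by
      rw [hmin, map_sub, aeval_X_pow, aeval_C, neg_pow, hr2]
      norm_num
    have hcomp : (F.subtype).comp (algebraMap ℚ ↥F) = algebraMap ℚ K :=
      Subsingleton.elim _ _
    exact arith_main F hAC hcomp (F.neg_mem hrF) hrne hint hroot (hF hrF)
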